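/- Suppose X_M is Hermitian with X_M − B^(1) positive definite and X_M = Q^(1) − (A^(1))^H (X_M − B^(1))^{-1} A^(1), and Y_M is Hermitian with Q^(1) − Y_M positive definite and Y_M = B^(1) + A^(1)(Q^(1) − Y_M)^{-1}(A^(1))^H. Set T_1 = (X_M − B^(1))^{-1} A^(1) and S_1 = A^(1)(Q^(1) − Y_M)^{-1}. Then T_1 S_1^H = (X_M − B^(1))^{-1}(Y_M − B^(1)) and S_1^H T_1 = (Q^(1) − Y_M)^{-1}(Q^(1) − X_M); moreover, if Y_M ≥ B^(1) then every eigenvalue of T_1 S_1^H is real and nonnegative. -/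

import Mathlib

open Matrix Filter Topology
open scoped ComplexOrder

noncomputable section

/-- Square complex matrices of size `n`. -/
abbrev Mat (n : ℕ) := Matrix (Fin n) (Fin n) ℂ

/-- An operator `f` on complex `n × n` matrices is *admissible* if it satisfies
(a1) `f (f X) = X`, (a2) additivity, (a3) multiplicativity, and
(a4) `f X` is positive semidefinite whenever `X` is. -/
def Admissible {n : ℕ} (f : Mat n → Mat n) : Prop :=
  (∀ X, f (f X) = X) ∧
  (∀ X Y, f (X + Y) = f X + f Y) ∧
  (∀ X Y, f (X * Y) = f X * f Y) ∧
  (∀ X, X.PosSemidef → (f X).PosSemidef)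

/-- The spectrum over `ℂ` of a positive semidefinite matrix consists of
nonnegative real numbers. -/
lemma psd_spec_aux {n : ℕ} {M : Mat n} (hM : M.PosSemidef) :
    ∀ μ ∈ spectrum ℂ M, ∃ r : ℝ, 0 ≤ r ∧ μ = (r : ℂ) := by
  intro μ hμ
  have hH : M.IsHermitian := hM.1
  set U : Mat n := (hH.eigenvectorUnitary : Mat n) with hU
  have hUmem := hH.eigenvectorUnitary.2
  have h1 : star U * U = 1 := hUmem.1
  have h2 : U * star U = 1 := hUmem.2
  let u : (Mat n)ˣ := ⟨U, star U, h2, h1⟩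
  have hst : M = (u : Mat n) * diagonal (RCLike.ofReal ∘ hH.eigenvalues) *
      ((u⁻¹ : (Mat n)ˣ) : Mat n) := hH.spectral_theorem
  rw [hst, spectrum.units_conjugate, spectrum_diagonal] at hμ
  obtain ⟨i, hi⟩ := hμ
  exact ⟨hH.eigenvalues i, hM.eigenvalues_nonneg i, hi.symm⟩

/-- The spectrum over `ℂ` of `P⁻¹ * M` with `P` positive definite and `M` positive
semidefinite consists of nonnegative real numbers. -/
lemma pd_inv_psd_spec_aux {n : ℕ} {P M : Mat n} (hP : P.PosDef) (hM : M.PosSemidef) :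
    ∀ μ ∈ spectrum ℂ (P⁻¹ * M), ∃ r : ℝ, 0 ≤ r ∧ μ = (r : ℂ) := by
  intro μ hμ
  have hPinv : P⁻¹.PosDef := hP.inv
  set R : Mat n := (open scoped MatrixOrder in CFC.sqrt P⁻¹) with hR
  have hRpsd : R.PosSemidef :=
    open scoped MatrixOrder in (CFC.sqrt_nonneg P⁻¹).posSemidef
  have hRR : R * R = P⁻¹ :=
    open scoped MatrixOrder in CFC.sqrt_mul_sqrt_self P⁻¹ hPinv.posSemidef.nonneg
  have hdet : IsUnit R.det := by
    have : IsUnit (R.det * R.det) := by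
      rw [← det_mul, hRR]
      exact hPinv.isUnit.map detMonoidHom
    exact isUnit_of_mul_isUnit_left this
  have hRu : IsUnit R := (isUnit_iff_isUnit_det R).2 hdet
  let u : (Mat n)ˣ := hRu.unit
  have hconj : P⁻¹ * M = (u : Mat n) * (R * M * R) * ((u⁻¹ : (Mat n)ˣ) : Mat n) := by
    have huR : (u : Mat n) = R := rfl
    have h1 : R * ((u⁻¹ : (Mat n)ˣ) : Mat n) = 1 := by
      rw [← huR]; exact_mod_cast u.mul_inv
    calc P⁻¹ * M = (R * R) * M := by rw [hRR]
      _ = R * (R * M * R) * ((u⁻¹ : (Mat n)ˣ) : Mat n) := by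
          rw [show R * (R * M * R) = R * R * M * R by noncomm_ring,
            mul_assoc (R*R*M) R _, h1, mul_one]
      _ = (u : Mat n) * (R * M * R) * ((u⁻¹ : (Mat n)ˣ) : Mat n) := rfl
  rw [hconj, spectrum.units_conjugate] at hμ
  have hRMR : (R * M * R).PosSemidef := by
    have := hM.conjTranspose_mul_mul_same R
    rwa [hRpsd.1.eq] at this
  exact psd_spec_aux hRMR μ hμ

/-- formulas for `T_1 S_1ᴴ` and `S_1ᴴ T_1`, and nonnegativity of the
eigenvalues of `T_1 S_1ᴴ` when `Y_M ≥ B^{(1)}`. -/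
theorem stmt_15 {n : ℕ} (f : Mat n → Mat n) (hf : Admissible f)
    (A Q : Mat n) (hQ : Q.PosDef)
    (A1 B1 Q1 XM YM T1 S1 : Mat n)
    (hA1 : A1 = f A * (f Q)⁻¹ * A)
    (hB1 : B1 = f A * (f Q)⁻¹ * (f A)ᴴ)
    (hQ1 : Q1 = Q - Aᴴ * (f Q)⁻¹ * A)
    (hXMh : XM.IsHermitian) (hXMpd : (XM - B1).PosDef)
    (hXMeq : XM = Q1 - A1ᴴ * (XM - B1)⁻¹ * A1)
    (hYMh : YM.IsHermitian) (hYMpd : (Q1 - YM).PosDef)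
    (hYMeq : YM = B1 + A1 * (Q1 - YM)⁻¹ * A1ᴴ)
    (hT1 : T1 = (XM - B1)⁻¹ * A1)
    (hS1 : S1 = A1 * (Q1 - YM)⁻¹) :
    T1 * S1ᴴ = (XM - B1)⁻¹ * (YM - B1) ∧
    S1ᴴ * T1 = (Q1 - YM)⁻¹ * (Q1 - XM) ∧
    ((YM - B1).PosSemidef →
      ∀ μ ∈ spectrum ℂ (T1 * S1ᴴ), ∃ r : ℝ, 0 ≤ r ∧ μ = (r : ℂ)) := by
  have hS1H : S1ᴴ = (Q1 - YM)⁻¹ * A1ᴴ := by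
    rw [hS1, conjTranspose_mul, conjTranspose_nonsing_inv, hYMpd.1.eq]
  have hYB : A1 * (Q1 - YM)⁻¹ * A1ᴴ = YM - B1 := by
    conv_rhs => rw [hYMeq]
    rw [add_sub_cancel_left]
  have hQX : A1ᴴ * (XM - B1)⁻¹ * A1 = Q1 - XM := by
    conv_rhs => rw [hXMeq]
    rw [sub_sub_cancel]
  have h1 : T1 * S1ᴴ = (XM - B1)⁻¹ * (YM - B1) := by
    rw [hT1, hS1H, ← hYB]; noncomm_ring
  have h2 : S1ᴴ * T1 = (Q1 - YM)⁻¹ * (Q1 - XM) := by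
    rw [hT1, hS1H, ← hQX]; noncomm_ring
  refine ⟨h1, h2, fun hpsd μ hμ => ?_⟩
  rw [h1] at hμ
  exact pd_inv_psd_spec_aux hXMpd hpsd μ hμ
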